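/- For a connected graph with Laplacian eigenvalues 0 = λ₁ < λ₂ ≤ ... ≤ λ_n and orthonormal eigenvectors φ_k, and any 2 ≤ p ≤ n, the partial-sum bounds hold: 2/λ_n + Σ_{k=2}^p (1/λ_k − 1/λ_n)(φ_k(i)−φ_k(j))² ≤ Σ_{k=2}^n (1/λ_k)(φ_k(i)−φ_k(j))² ≤ 2/λ_p + Σ_{k=2}^p (1/λ_k − 1/λ_p)(φ_k(i)−φ_k(j))², and the analogous bounds with λ_k replaced by λ_k² throughout. -/

import Mathlib

open Matrix Finset

/-- `A` is a (weighted) adjacency matrix: symmetric, nonnegative, no self-loops. -/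
def IsAdjMat {n : ℕ} (A : Matrix (Fin n) (Fin n) ℝ) : Prop :=
  A.IsSymm ∧ (∀ i j, 0 ≤ A i j) ∧ ∀ i, A i i = 0

/-- Combinatorial Laplacian `L = D - A`. -/
def lap {n : ℕ} (A : Matrix (Fin n) (Fin n) ℝ) : Matrix (Fin n) (Fin n) ℝ :=
  Matrix.diagonal (fun i => ∑ j, A i j) - A

/-- Connectivity: the kernel of the Laplacian is spanned by the all-ones vector. -/
def IsConnectedLap {n : ℕ} (L : Matrix (Fin n) (Fin n) ℝ) : Prop :=
  ∀ v : Fin n → ℝ, L.mulVec v = 0 → ∃ c : ℝ, v = fun _ => c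

/-- `Ld` is the Moore–Penrose pseudoinverse of `L`. -/
def IsMoorePenrose {n : ℕ} (L Ld : Matrix (Fin n) (Fin n) ℝ) : Prop :=
  L * Ld * L = L ∧ Ld * L * Ld = Ld ∧ (L * Ld)ᵀ = L * Ld ∧ (Ld * L)ᵀ = Ld * L

/-- Effective resistance `R_ij = L†_ii + L†_jj - 2 L†_ij`. -/
def effR {n : ℕ} (Ld : Matrix (Fin n) (Fin n) ℝ) (i j : Fin n) : ℝ :=
  Ld i i + Ld j j - 2 * Ld i j

lemma sum_bound_upper {ι : Type*} [DecidableEq ι] (S P : Finset ι) (hPS : P ⊆ S)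
    (f c : ι → ℝ) (hc : ∀ k ∈ S, 0 ≤ c k) (hsum : ∑ k ∈ S, c k = 2) (b : ℝ)
    (hub : ∀ k ∈ S, k ∉ P → f k ≤ b) :
    ∑ k ∈ S, f k * c k ≤ 2 * b + ∑ k ∈ P, (f k - b) * c k := by
  have hsplit : ∑ k ∈ S \ P, f k * c k + ∑ k ∈ P, f k * c k = ∑ k ∈ S, f k * c k :=
    Finset.sum_sdiff hPS
  have hcs : ∑ k ∈ S \ P, c k + ∑ k ∈ P, c k = 2 := by rw [Finset.sum_sdiff hPS, hsum]
  have h1 : ∑ k ∈ S \ P, f k * c k ≤ ∑ k ∈ S \ P, b * c k := by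
    refine Finset.sum_le_sum fun k hk => ?_
    have hk' := Finset.mem_sdiff.mp hk
    exact mul_le_mul_of_nonneg_right (hub k hk'.1 hk'.2) (hc k hk'.1)
  have h2 : ∑ k ∈ S \ P, b * c k = b * ∑ k ∈ S \ P, c k := by rw [Finset.mul_sum]
  have h3 : ∑ k ∈ P, (f k - b) * c k = ∑ k ∈ P, f k * c k - b * ∑ k ∈ P, c k := by
    rw [Finset.mul_sum, ← Finset.sum_sub_distrib]
    exact Finset.sum_congr rfl fun k _ => by ring
  have h5 : ∑ k ∈ S \ P, c k = 2 - ∑ k ∈ P, c k := by linarith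
  have h4 : b * ∑ k ∈ S \ P, c k = 2 * b - b * ∑ k ∈ P, c k := by rw [h5]; ring
  linarith

lemma sum_bound_lower {ι : Type*} [DecidableEq ι] (S P : Finset ι) (hPS : P ⊆ S)
    (f c : ι → ℝ) (hc : ∀ k ∈ S, 0 ≤ c k) (hsum : ∑ k ∈ S, c k = 2) (b : ℝ)
    (hlb : ∀ k ∈ S, k ∉ P → b ≤ f k) :
    2 * b + ∑ k ∈ P, (f k - b) * c k ≤ ∑ k ∈ S, f k * c k := by
  have := sum_bound_upper S P hPS (fun k => -f k) c hc hsum (-b)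
    (fun k hk hk' => by simpa using hlb k hk hk')
  have heq : ∑ k ∈ P, (-f k - -b) * c k = -∑ k ∈ P, (f k - b) * c k := by
    rw [← Finset.sum_neg_distrib]; exact Finset.sum_congr rfl fun k _ => by ring
  have heq2 : ∑ k ∈ S, (fun k => -f k) k * c k = -∑ k ∈ S, f k * c k := by
    rw [← Finset.sum_neg_distrib]; exact Finset.sum_congr rfl fun k _ => by ring
  rw [heq2, heq] at this
  linarith

/-- Low-rank partial-sum bounds: for a connected Laplacian with eigenvalues
`0 = λ₁ < λ₂ ≤ … ≤ λ_n`, orthonormal eigenvectors `φ_k`, any truncation index `p ≥ 2`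
and distinct vertices `i ≠ j`,
`2/λ_n + ∑_{k=2}^p (1/λ_k - 1/λ_n)(φ_k(i)-φ_k(j))²
  ≤ ∑_{k=2}^n (1/λ_k)(φ_k(i)-φ_k(j))²
  ≤ 2/λ_p + ∑_{k=2}^p (1/λ_k - 1/λ_p)(φ_k(i)-φ_k(j))²`,
and the analogous bounds with `λ_k` replaced by `λ_k²`. -/
theorem partial_sum_bounds (n : ℕ) (hn : 0 < n)
    (A L : Matrix (Fin n) (Fin n) ℝ)
    (hA : IsAdjMat A) (hL : L = lap A) (hconn : IsConnectedLap L)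
    (lam : Fin n → ℝ) (φ : Fin n → Fin n → ℝ)
    (horth : ∀ k l, (φ k) ⬝ᵥ (φ l) = if k = l then (1 : ℝ) else 0)
    (heig : ∀ k, L.mulVec (φ k) = lam k • φ k)
    (hlam0 : lam ⟨0, hn⟩ = 0) (hmono : Monotone lam)
    (hpos : ∀ k, k ≠ (⟨0, hn⟩ : Fin n) → 0 < lam k)
    (hphi1 : φ ⟨0, hn⟩ = fun _ => 1 / Real.sqrt n)
    (hi : Fin n) (hhi : hi.val = n - 1)
    (p : Fin n) (hp : (⟨0, hn⟩ : Fin n) < p)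
    (i j : Fin n) (hij : i ≠ j) :
    (2 / lam hi
        + ∑ k ∈ Finset.univ.filter (fun k => k ≠ (⟨0, hn⟩ : Fin n) ∧ k ≤ p),
            (1 / lam k - 1 / lam hi) * (φ k i - φ k j) ^ 2
      ≤ ∑ k ∈ Finset.univ.erase (⟨0, hn⟩ : Fin n), (1 / lam k) * (φ k i - φ k j) ^ 2)
    ∧ (∑ k ∈ Finset.univ.erase (⟨0, hn⟩ : Fin n), (1 / lam k) * (φ k i - φ k j) ^ 2
      ≤ 2 / lam p
        + ∑ k ∈ Finset.univ.filter (fun k => k ≠ (⟨0, hn⟩ : Fin n) ∧ k ≤ p),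
            (1 / lam k - 1 / lam p) * (φ k i - φ k j) ^ 2)
    ∧ (2 / (lam hi) ^ 2
        + ∑ k ∈ Finset.univ.filter (fun k => k ≠ (⟨0, hn⟩ : Fin n) ∧ k ≤ p),
            (1 / (lam k) ^ 2 - 1 / (lam hi) ^ 2) * (φ k i - φ k j) ^ 2
      ≤ ∑ k ∈ Finset.univ.erase (⟨0, hn⟩ : Fin n), (1 / (lam k) ^ 2) * (φ k i - φ k j) ^ 2)
    ∧ (∑ k ∈ Finset.univ.erase (⟨0, hn⟩ : Fin n), (1 / (lam k) ^ 2) * (φ k i - φ k j) ^ 2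
      ≤ 2 / (lam p) ^ 2
        + ∑ k ∈ Finset.univ.filter (fun k => k ≠ (⟨0, hn⟩ : Fin n) ∧ k ≤ p),
            (1 / (lam k) ^ 2 - 1 / (lam p) ^ 2) * (φ k i - φ k j) ^ 2) := by
  classical
  set z : Fin n := ⟨0, hn⟩ with hz
  -- rows of the eigenvector matrix are orthonormal
  have hM : (Matrix.of φ) * (Matrix.of φ)ᵀ = 1 := by
    ext k l
    simpa [Matrix.mul_apply, Matrix.one_apply, dotProduct] using horth k l
  have hM' : (Matrix.of φ)ᵀ * (Matrix.of φ) = 1 := mul_eq_one_comm.mp hM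
  have hcol : ∀ a b : Fin n, (∑ k, φ k a * φ k b) = if a = b then 1 else 0 := by
    intro a b
    have h := congrArg (fun M => M a b) hM'
    simpa [Matrix.mul_apply, Matrix.transpose_apply, Matrix.one_apply] using h
  set c : Fin n → ℝ := fun k => (φ k i - φ k j) ^ 2 with hcdef
  have hc0 : ∀ k, 0 ≤ c k := fun k => sq_nonneg _
  have hsum2 : ∑ k, c k = 2 := by
    have e : ∑ k, c k
        = ∑ k, (φ k i * φ k i - 2 * (φ k i * φ k j) + φ k j * φ k j) :=
      Finset.sum_congr rfl fun k _ => by simp only [hcdef]; ring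
    rw [e, Finset.sum_add_distrib, Finset.sum_sub_distrib, ← Finset.mul_sum,
      hcol i i, hcol i j, hcol j j]
    simp [hij]
    norm_num
  have hczero : c z = 0 := by
    simp only [hcdef, hphi1]
    ring
  set S : Finset (Fin n) := Finset.univ.erase z with hSdef
  have hsumS : ∑ k ∈ S, c k = 2 := by
    rw [hSdef, Finset.sum_erase_eq_sub (Finset.mem_univ z), hsum2, hczero, sub_zero]
  set P : Finset (Fin n) :=
    Finset.univ.filter (fun k => k ≠ z ∧ k ≤ p) with hPdef
  have hPS : P ⊆ S := by
    intro k hk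
    rw [hPdef, Finset.mem_filter] at hk
    exact Finset.mem_erase.mpr ⟨hk.2.1, Finset.mem_univ k⟩
  have hcS : ∀ k ∈ S, 0 ≤ c k := fun k _ => hc0 k
  have hpz : p ≠ z := hp.ne'
  have hlamp : 0 < lam p := hpos p hpz
  have hlehi : ∀ k : Fin n, k ≤ hi := by
    intro k
    have : k.val ≤ n - 1 := Nat.le_pred_of_lt k.isLt
    exact Fin.le_def.mpr (by omega)
  have hlamhi : 0 < lam hi := lt_of_lt_of_le hlamp (hmono (hlehi p))
  -- membership facts
  have hmemS : ∀ k ∈ S, k ≠ z := fun k hk => (Finset.mem_erase.mp hk).1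
  have hout : ∀ k ∈ S, k ∉ P → p < k := by
    intro k hk hkP
    rw [hPdef, Finset.mem_filter] at hkP
    push_neg at hkP
    exact hkP (Finset.mem_univ k) (hmemS k hk)
  refine ⟨?_, ?_, ?_, ?_⟩
  · have := sum_bound_lower S P hPS (fun k => 1 / lam k) c hcS hsumS (1 / lam hi)
      (fun k hk _ => one_div_le_one_div_of_le (hpos k (hmemS k hk)) (hmono (hlehi k)))
    have h2 : (2 : ℝ) / lam hi = 2 * (1 / lam hi) := by ring
    rw [h2]
    exact this
  · have := sum_bound_upper S P hPS (fun k => 1 / lam k) c hcS hsumS (1 / lam p)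
      (fun k hk hkP => one_div_le_one_div_of_le hlamp (hmono (hout k hk hkP).le))
    have h2 : (2 : ℝ) / lam p = 2 * (1 / lam p) := by ring
    rw [h2]
    exact this
  · have := sum_bound_lower S P hPS (fun k => 1 / (lam k) ^ 2) c hcS hsumS
      (1 / (lam hi) ^ 2)
      (fun k hk _ => one_div_le_one_div_of_le (pow_pos (hpos k (hmemS k hk)) 2)
        (pow_le_pow_left₀ (hpos k (hmemS k hk)).le (hmono (hlehi k)) 2))
    have h2 : (2 : ℝ) / (lam hi) ^ 2 = 2 * (1 / (lam hi) ^ 2) := by ring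
    rw [h2]
    exact this
  · have := sum_bound_upper S P hPS (fun k => 1 / (lam k) ^ 2) c hcS hsumS
      (1 / (lam p) ^ 2)
      (fun k hk hkP => one_div_le_one_div_of_le (pow_pos hlamp 2)
        (pow_le_pow_left₀ hlamp.le (hmono (hout k hk hkP).le) 2))
    have h2 : (2 : ℝ) / (lam p) ^ 2 = 2 * (1 / (lam p) ^ 2) := by ring
    rw [h2]
    exact this
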